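/- arXiv:0704.3052 — 4 statements merged into one kernel-verified Lean document; each statement's English description precedes it below -/
import Mathlib

section
/- Let f be analytic on an open set R ⊆ ℂ, let A ⊆ ℝ be an interval, let B ⊆ {z ∈ R : f(z)·f'(z) ≠ 0}, and let p : A → B be a differentiable function satisfying the differential equation p'(s) = |f'(p(s))·conj(f(p(s)))|·i / (f'(p(s))·conj(f(p(s)))) for all s ∈ A, with p(s₀) = z₀ for some s₀ ∈ A (where f(z₀) ≠ 0 and f'(z₀) ≠ 0). Then |f(z)| = |f(z₀)| for every z in the image p(A). -/
open Complex

/-- **Proposition 1 (level set property).** If `f` is analytic on an open set `R`,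
`A ⊆ ℝ` is an interval, `B ⊆ {z ∈ R : f z * f' z ≠ 0}`, and `p : A → B` is differentiable
with `p'(s) = |f'(p s) * conj (f (p s))| * I / (f'(p s) * conj (f (p s)))` on `A` and
`p s₀ = z₀` for some `s₀ ∈ A` (where `f z₀ ≠ 0` and `f' z₀ ≠ 0`), then
`|f z| = |f z₀|` for every `z ∈ p '' A`. -/
theorem level_path_constant_modulus
    (f : ℂ → ℂ) (R : Set ℂ) (hR : IsOpen R) (hf : AnalyticOnNhd ℂ f R)
    (A : Set ℝ) (hA : A.OrdConnected)
    (B : Set ℂ) (hB : B ⊆ {z ∈ R | f z * deriv f z ≠ 0})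
    (p p' : ℝ → ℂ)
    (hmaps : ∀ s ∈ A, p s ∈ B)
    (hdiff : ∀ s ∈ A, HasDerivWithinAt p (p' s) A s)
    (hde : ∀ s ∈ A, p' s =
      ((‖deriv f (p s) * (starRingEnd ℂ) (f (p s))‖ : ℝ) : ℂ) * Complex.I /
        (deriv f (p s) * (starRingEnd ℂ) (f (p s))))
    (s₀ : ℝ) (hs₀ : s₀ ∈ A) (z₀ : ℂ) (hz₀ : p s₀ = z₀)
    (hfz₀ : f z₀ ≠ 0) (hfz₀' : deriv f z₀ ≠ 0) :
    ∀ z ∈ p '' A, ‖f z‖ = ‖f z₀‖ := by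
  set φ : ℝ → ℝ := fun s => Complex.normSq (f (p s)) with hφ
  have key : ∀ s ∈ A, HasDerivWithinAt φ 0 A s := by
    intro s hs
    have hpB := hB (hmaps s hs)
    have hpR : p s ∈ R := hpB.1
    have hne : f (p s) * deriv f (p s) ≠ 0 := hpB.2
    have hfps : f (p s) ≠ 0 := fun h => hne (by rw [h]; ring)
    have hfps' : deriv f (p s) ≠ 0 := fun h => hne (by rw [h]; ring)
    set w : ℂ := deriv f (p s) * (starRingEnd ℂ) (f (p s)) with hw
    have hwne : w ≠ 0 := mul_ne_zero hfps' (star_ne_zero.mpr hfps)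
    -- f has derivative at p s
    have hfd : HasDerivAt f (deriv f (p s)) (p s) :=
      ((hf (p s) hpR).differentiableAt.hasDerivAt)
    -- g = f ∘ p
    have hg : HasDerivWithinAt (fun t => f (p t)) (deriv f (p s) * p' s) A s :=
      hfd.comp_hasDerivWithinAt s (hdiff s hs)
    have hgc : HasDerivWithinAt (fun t => (starRingEnd ℂ) (f (p t)))
        ((starRingEnd ℂ) (deriv f (p s) * p' s)) A s := by
      simpa [Function.comp_def] using (Complex.conjCLE.hasFDerivAt.comp_hasDerivWithinAt s hg)
    have hmul : HasDerivWithinAt (fun t => f (p t) * (starRingEnd ℂ) (f (p t)))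
        (deriv f (p s) * p' s * (starRingEnd ℂ) (f (p s)) +
          f (p s) * (starRingEnd ℂ) (deriv f (p s) * p' s)) A s := hg.mul hgc
    have hre := Complex.reCLM.hasFDerivAt.comp_hasDerivWithinAt s hmul
    simp only [Complex.reCLM_apply] at hre
    have hwp : w * p' s = ((‖w‖ : ℝ) : ℂ) * Complex.I := by
      rw [hde s hs, ← hw]
      field_simp
    have hderiv0 : (deriv f (p s) * p' s * (starRingEnd ℂ) (f (p s)) +
          f (p s) * (starRingEnd ℂ) (deriv f (p s) * p' s)).re = 0 := by
      have h1 : deriv f (p s) * p' s * (starRingEnd ℂ) (f (p s)) =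
          ((‖w‖ : ℝ) : ℂ) * Complex.I := by rw [← hwp, hw]; ring
      have h2 : f (p s) * (starRingEnd ℂ) (deriv f (p s) * p' s) =
          (starRingEnd ℂ) (((‖w‖ : ℝ) : ℂ) * Complex.I) := by
        rw [← h1]; simp [mul_comm]
      rw [h1, h2]
      simp
    rw [hderiv0] at hre
    have heq : (⇑Complex.reCLM ∘ fun t => f (p t) * (starRingEnd ℂ) (f (p t))) = φ := by
      funext t
      simp [hφ, Complex.mul_conj]
    rwa [heq] at hre
  have hconv : Convex ℝ A := convex_iff_ordConnected.mpr hA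
  have hconst : ∀ s ∈ A, φ s = φ s₀ := by
    intro s hs
    have h0 := hconv.norm_image_sub_le_of_norm_hasDerivWithin_le (C := 0) key
      (fun x hx => by simp) hs₀ hs
    have : φ s - φ s₀ = 0 := norm_eq_zero.mp (le_antisymm (by simpa using h0) (norm_nonneg _))
    linarith
  rintro z ⟨s, hs, rfl⟩
  have h1 : Complex.normSq (f (p s)) = Complex.normSq (f z₀) := by
    simpa [hφ, hz₀] using hconst s hs
  rw [Complex.norm_def, Complex.norm_def, h1]
end

section
/- Let f be analytic on an open set R ⊆ ℂ, let A ⊆ ℝ be an interval, and let p : A → ℂ be a differentiable function taking values in {z ∈ R : f(z)·f'(z) ≠ 0} and satisfying p'(s) = |f'(p(s))·conj(f(p(s)))|·i / (f'(p(s))·conj(f(p(s)))) for all s ∈ A. Then the derivative with respect to s of the function s ↦ f(p(s))·conj(f(p(s))) = |f(p(s))|² is identically zero on A. -/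
open Complex

/-- Along a level path `p` of an analytic function `f`, the derivative of
`s ↦ f (p s) * conj (f (p s)) = |f (p s)|²` vanishes identically. -/
theorem level_path_modulus_sq_deriv_zero
    (f : ℂ → ℂ) (R : Set ℂ) (hR : IsOpen R) (hf : AnalyticOnNhd ℂ f R)
    (A : Set ℝ) (hA : A.OrdConnected)
    (p p' : ℝ → ℂ)
    (hmaps : ∀ s ∈ A, p s ∈ {z ∈ R | f z * deriv f z ≠ 0})
    (hdiff : ∀ s ∈ A, HasDerivWithinAt p (p' s) A s)
    (hde : ∀ s ∈ A, p' s =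
      (‖deriv f (p s) * (starRingEnd ℂ) (f (p s))‖ : ℂ) * Complex.I /
        (deriv f (p s) * (starRingEnd ℂ) (f (p s)))) :
    ∀ s ∈ A, HasDerivWithinAt (fun t => f (p t) * (starRingEnd ℂ) (f (p t))) 0 A s := by
  intro s hs
  obtain ⟨hpR, hne⟩ := hmaps s hs
  have hfne : f (p s) ≠ 0 := fun h => hne (by simp [h])
  have hdne : deriv f (p s) ≠ 0 := fun h => hne (by simp [h])
  have hfd : HasDerivAt f (deriv f (p s)) (p s) :=
    ((hf (p s) hpR).differentiableAt).hasDerivAt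
  have hg : HasDerivWithinAt (fun t => f (p t)) (deriv f (p s) * p' s) A s :=
    hfd.comp_hasDerivWithinAt s (hdiff s hs)
  have hconj : HasDerivWithinAt (fun t => (starRingEnd ℂ) (f (p t)))
      ((starRingEnd ℂ) (deriv f (p s) * p' s)) A s := by
    have := (Complex.conjCLE.toContinuousLinearMap.hasFDerivAt
      (x := f (p s))).comp_hasDerivWithinAt s hg
    simpa [Function.comp_def] using this
  have h := hg.mul hconj
  have key : deriv f (p s) * p' s * (starRingEnd ℂ) (f (p s)) +
      f (p s) * (starRingEnd ℂ) (deriv f (p s) * p' s) = 0 := by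
    have hcfne : (starRingEnd ℂ) (f (p s)) ≠ 0 := by simpa using hfne
    have hcdne : (starRingEnd ℂ) (deriv f (p s)) ≠ 0 := by simpa using hdne
    rw [hde s hs]
    simp only [map_mul, map_div₀, Complex.conj_I, Complex.conj_conj, Complex.conj_ofReal,
      Complex.norm_conj]
    field_simp
    ring
  rw [← key]
  exact h
end

section
/- Let f be analytic on an open set R ⊆ ℂ, let A ⊆ ℝ be an interval, let B ⊆ {z ∈ R : f(z)·f'(z) ≠ 0}, and let p : A → B be a differentiable function satisfying the oppositely oriented differential equation p'(s) = −|f'(p(s))·conj(f(p(s)))|·i / (f'(p(s))·conj(f(p(s)))) for all s ∈ A, with p(s₀) = z₀ for some s₀ ∈ A (where f(z₀) ≠ 0 and f'(z₀) ≠ 0). Then |f(z)| = |f(z₀)| for every z ∈ p(A), and |p'(s)| = 1 for all s ∈ A. -/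
open Complex

/-- **Opposite orientation variant.** If `p` satisfies the oppositely oriented level-path
differential equation
`p'(s) = -|f'(p s) * conj (f (p s))| * I / (f'(p s) * conj (f (p s)))` on an interval `A`
with `p s₀ = z₀`, then `|f z| = |f z₀|` on `p '' A` and `|p'(s)| = 1` on `A`. -/
theorem level_path_opposite_orientation
    (f : ℂ → ℂ) (R : Set ℂ) (hR : IsOpen R) (hf : AnalyticOnNhd ℂ f R)
    (A : Set ℝ) (hA : A.OrdConnected)
    (B : Set ℂ) (hB : B ⊆ {z ∈ R | f z * deriv f z ≠ 0})
    (p p' : ℝ → ℂ)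
    (hmaps : ∀ s ∈ A, p s ∈ B)
    (hdiff : ∀ s ∈ A, HasDerivWithinAt p (p' s) A s)
    (hde : ∀ s ∈ A, p' s =
      -(((‖deriv f (p s) * (starRingEnd ℂ) (f (p s))‖ : ℝ) : ℂ) * Complex.I /
        (deriv f (p s) * (starRingEnd ℂ) (f (p s)))))
    (s₀ : ℝ) (hs₀ : s₀ ∈ A) (z₀ : ℂ) (hz₀ : p s₀ = z₀)
    (hfz₀ : f z₀ ≠ 0) (hfz₀' : deriv f z₀ ≠ 0) :
    (∀ z ∈ p '' A, ‖f z‖ = ‖f z₀‖) ∧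
      (∀ s ∈ A, ‖p' s‖ = 1) := by
  -- basic facts for points of A
  have hw : ∀ s ∈ A, deriv f (p s) * (starRingEnd ℂ) (f (p s)) ≠ 0 := by
    intro s hs
    obtain ⟨hR', hne⟩ := hB (hmaps s hs)
    exact mul_ne_zero (fun h => hne (by simp [h])) (by
      simp only [ne_eq, map_eq_zero]
      exact fun h => hne (by simp [h]))
  -- |p' s| = 1
  have habs : ∀ s ∈ A, ‖p' s‖ = 1 := by
    intro s hs
    rw [hde s hs]
    have hw' := hw s hs
    rw [norm_neg, norm_div, norm_mul, Complex.norm_I, Complex.norm_real,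
      norm_norm, mul_one, div_self]
    simpa using hw'
  refine ⟨?_, habs⟩
  -- the squared modulus has zero derivative along p
  have key : ∀ s ∈ A, HasDerivWithinAt (fun t => Complex.normSq (f (p t))) 0 A s := by
    intro s hs
    obtain ⟨hR', hne⟩ := hB (hmaps s hs)
    have hfd : HasDerivAt f (deriv f (p s)) (p s) :=
      ((hf (p s) hR').differentiableAt).hasDerivAt
    have hgd : HasDerivWithinAt (fun t => f (p t)) (deriv f (p s) * p' s) A s :=
      hfd.comp_hasDerivWithinAt s (hdiff s hs)
    have hcj : HasDerivWithinAt (fun t => (starRingEnd ℂ) (f (p t)))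
        ((starRingEnd ℂ) (deriv f (p s) * p' s)) A s := by
      have := Complex.conjCLE.hasFDerivAt.comp_hasDerivWithinAt (x := s) hgd
      simpa [Function.comp_def] using this
    have hmul : HasDerivWithinAt (fun t => f (p t) * (starRingEnd ℂ) (f (p t)))
        (deriv f (p s) * p' s * (starRingEnd ℂ) (f (p s)) +
          f (p s) * (starRingEnd ℂ) (deriv f (p s) * p' s)) A s := hgd.mul hcj
    have hre : HasDerivWithinAt (fun t => (f (p t) * (starRingEnd ℂ) (f (p t))).re)
        ((deriv f (p s) * p' s * (starRingEnd ℂ) (f (p s)) +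
          f (p s) * (starRingEnd ℂ) (deriv f (p s) * p' s)).re) A s := by
      have h := Complex.reCLM.hasFDerivAt.comp_hasDerivWithinAt (x := s) hmul
      simpa only [Function.comp_def, Complex.reCLM_apply] using h
    -- identify the function with normSq
    have hfun : (fun t => (f (p t) * (starRingEnd ℂ) (f (p t))).re) =
        fun t => Complex.normSq (f (p t)) := by
      funext t
      rw [Complex.mul_conj]
      simp
    -- compute the derivative value
    have hval : deriv f (p s) * p' s * (starRingEnd ℂ) (f (p s)) =
        -(((‖deriv f (p s) * (starRingEnd ℂ) (f (p s))‖ : ℝ) : ℂ) * Complex.I) := by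
      rw [hde s hs]
      field_simp [hw s hs]
      obtain ⟨h1, h2⟩ := mul_ne_zero_iff.mp (hw s hs)
      linear_combination (-(((‖deriv f (p s) * (starRingEnd ℂ) (f (p s))‖ : ℝ) : ℂ)) *
          (starRingEnd ℂ) (f (p s)) * ((starRingEnd ℂ) (f (p s)))⁻¹) * mul_inv_cancel₀ h1 +
        (-(((‖deriv f (p s) * (starRingEnd ℂ) (f (p s))‖ : ℝ) : ℂ))) * mul_inv_cancel₀ h2
    have hval2 : f (p s) * (starRingEnd ℂ) (deriv f (p s) * p' s) =
        (starRingEnd ℂ) (deriv f (p s) * p' s * (starRingEnd ℂ) (f (p s))) := by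
      simp only [map_mul, Complex.conj_conj]
      ring
    have hzero : (deriv f (p s) * p' s * (starRingEnd ℂ) (f (p s)) +
        f (p s) * (starRingEnd ℂ) (deriv f (p s) * p' s)).re = 0 := by
      rw [hval2, hval]
      simp
    rw [hfun, hzero] at hre
    exact hre
  -- constancy on the convex set A
  have hconv : Convex ℝ A := hA.convex
  have hconst : ∀ s ∈ A, Complex.normSq (f (p s)) = Complex.normSq (f (p s₀)) := by
    intro s hs
    have := hconv.norm_image_sub_le_of_norm_hasDerivWithin_le
      (f := fun t => Complex.normSq (f (p t))) (f' := fun _ => 0) (C := 0)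
      (fun x hx => key x hx) (fun x _ => by simp) hs₀ hs
    simp only [zero_mul, norm_le_zero_iff, sub_eq_zero] at this
    exact this
  intro z hz
  obtain ⟨s, hs, rfl⟩ := hz
  have h1 := hconst s hs
  rw [hz₀] at h1
  rw [Complex.norm_def, Complex.norm_def, h1]
end

section
/- Let a, b, z₀ ∈ ℂ with a ≠ 0 and z₀ ≠ −b/a, and let s₀ ∈ ℝ. Define p : ℝ → ℂ by p(s) = (z₀ + b/a)·exp(i·(s − s₀)/|z₀ + b/a|) − b/a. Then p is differentiable, p(s₀) = z₀, and p satisfies the level-path differential equation for f(z) = a·z + b, namely p'(s) = |a·conj(a·p(s) + b)|·i / (a·conj(a·p(s) + b)) for all s ∈ ℝ. -/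
open Complex

/-- **Example (affine case), existence.** For `f z = a * z + b` with `a ≠ 0` and
`z₀ ≠ -b / a`, the function
`p s = (z₀ + b / a) * exp (I * (s - s₀) / |z₀ + b / a|) - b / a`
is differentiable, satisfies `p s₀ = z₀`, and solves the level-path differential equation
`p'(s) = |a * conj (a * p s + b)| * I / (a * conj (a * p s + b))` for all `s ∈ ℝ`. -/
theorem affine_level_path_solution
    (a b z₀ : ℂ) (ha : a ≠ 0) (hz₀ : z₀ ≠ -b / a) (s₀ : ℝ)
    (p : ℝ → ℂ)
    (hp : ∀ s : ℝ, p s =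
      (z₀ + b / a) * Complex.exp (Complex.I * ((s : ℂ) - (s₀ : ℂ)) /
        ((‖z₀ + b / a‖ : ℝ) : ℂ)) - b / a) :
    Differentiable ℝ p ∧ p s₀ = z₀ ∧
      ∀ s : ℝ, deriv p s =
        ((‖a * (starRingEnd ℂ) (a * p s + b)‖ : ℝ) : ℂ) * Complex.I /
          (a * (starRingEnd ℂ) (a * p s + b)) := by
  set w : ℂ := z₀ + b / a with hwdef
  have hw : w ≠ 0 := by
    intro h
    apply hz₀
    rw [neg_div]
    linear_combination h
  set r : ℝ := ‖w‖ with hrdef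
  have hr : (r : ℂ) ≠ 0 := by
    simpa [hrdef] using (norm_ne_zero_iff.mpr hw)
  have hfun : p = fun s : ℝ => w * Complex.exp (Complex.I * ((s : ℂ) - (s₀ : ℂ)) / (r : ℂ)) - b / a :=
    funext hp
  have key : ∀ s : ℝ, HasDerivAt p
      (Complex.I / (r : ℂ) * (w * Complex.exp (Complex.I * ((s : ℂ) - (s₀ : ℂ)) / (r : ℂ)))) s := by
    intro s
    rw [hfun]
    have h1 : HasDerivAt (fun s : ℝ => (s : ℂ)) 1 s := by
      simpa using (hasDerivAt_id s).ofReal_comp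
    have h2 : HasDerivAt (fun s : ℝ => Complex.I * ((s : ℂ) - (s₀ : ℂ)) / (r : ℂ))
        (Complex.I / (r : ℂ)) s := by
      have := ((h1.sub_const (s₀ : ℂ)).const_mul Complex.I).div_const (r : ℂ)
      simpa using this
    have h3 := (h2.cexp.const_mul w).sub_const (b / a)
    convert h3 using 1
    · rfl
    ring
  refine ⟨fun s => (key s).differentiableAt, ?_, ?_⟩
  · rw [hp s₀]
    simp [hwdef]
  · intro s
    rw [(key s).deriv]
    set t : ℝ := (s - s₀) / r with htdef
    have hte : Complex.I * ((s : ℂ) - (s₀ : ℂ)) / (r : ℂ) = (t : ℂ) * Complex.I := by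
      rw [htdef]
      push_cast
      field_simp
    rw [hte]
    set e : ℂ := Complex.exp ((t : ℂ) * Complex.I) with hedef
    have he1 : ‖e‖ = 1 := Complex.norm_exp_ofReal_mul_I t
    have hene : e ≠ 0 := Complex.exp_ne_zero _
    have hconj_e : (starRingEnd ℂ) e * e = 1 := by
      rw [hedef, ← Complex.exp_conj, ← Complex.exp_add]
      simp
    have hap : a * p s + b = a * w * e := by
      rw [hp s, hte, ← hedef]
      field_simp
      ring
    rw [hap]
    have habs : ‖a * (starRingEnd ℂ) (a * w * e)‖ = ‖a‖ ^ 2 * r := by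
      rw [norm_mul, Complex.norm_conj, norm_mul, norm_mul, he1]
      ring
    rw [habs]
    have hD : a * (starRingEnd ℂ) (a * w * e) ≠ 0 := by
      simp [ha, hw, hene]
    rw [eq_div_iff hD, map_mul, map_mul]
    have h1 : a * (starRingEnd ℂ) a = ((‖a‖ : ℂ)) ^ 2 := by
      rw [Complex.mul_conj, Complex.normSq_eq_norm_sq]
      push_cast
      ring
    have h2 : w * (starRingEnd ℂ) w = ((r : ℂ)) ^ 2 := by
      rw [Complex.mul_conj, Complex.normSq_eq_norm_sq, hrdef]
      push_cast
      ring
    have : Complex.I / (r : ℂ) * (w * e) * (a * ((starRingEnd ℂ) a * (starRingEnd ℂ) w * (starRingEnd ℂ) e)) =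
        (a * (starRingEnd ℂ) a) * (w * (starRingEnd ℂ) w) * ((starRingEnd ℂ) e * e) * Complex.I / (r : ℂ) := by
      ring
    rw [this, h1, h2, hconj_e]
    push_cast
    field_simp
end
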